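/- Let n ≥ 2 and f ∈ L¹(σ), and define F : ℝⁿ → ℂ by F(ξ) = ∫_{S^{n-1}} exp(-i ⟪ξ, η⟫) f(η) dσ(η). Then for every x ∈ ℝⁿ, F(x) = 0 if and only if for every r > 0 the integral of F over the sphere {y ∈ ℝⁿ : ‖y - x‖ = r} with respect to the (n-1)-dimensional Hausdorff measure restricted to that sphere equals 0. -/

import Mathlib

open MeasureTheory

/-- The surface measure on the unit sphere `S^{n-1}` in `ℝⁿ`. -/
noncomputable def sphereMeasure (n : ℕ) : Measure (EuclideanSpace ℝ (Fin n)) :=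
  (μH[(n : ℝ) - 1]).restrict (Metric.sphere (0 : EuclideanSpace ℝ (Fin n)) 1)


open Metric ENNReal

namespace SphAux

lemma normsq {m : ℕ} (x : EuclideanSpace ℝ (Fin m)) : ‖x‖ ^ 2 = ∑ i, x i ^ 2 := by
  rw [EuclideanSpace.norm_eq, Real.sq_sqrt (by positivity)]
  simp [Real.norm_eq_abs, sq_abs]

lemma distsq {m : ℕ} (x y : EuclideanSpace ℝ (Fin m)) :
    dist x y ^ 2 = ∑ i, (x i - y i) ^ 2 := by
  rw [EuclideanSpace.dist_eq, Real.sq_sqrt (by positivity)]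
  simp [Real.dist_eq, sq_abs]

lemma sqrt_sub_sqrt {D a b : ℝ} (hD : 0 < D) (ha : D ≤ a) (hb : D ≤ b) :
    |Real.sqrt a - Real.sqrt b| ≤ |a - b| / Real.sqrt D := by
  have hsD : 0 < Real.sqrt D := Real.sqrt_pos.2 hD
  rw [le_div_iff₀ hsD]
  have h1 : |Real.sqrt a - Real.sqrt b| * (Real.sqrt a + Real.sqrt b) = |a - b| := by
    rw [← abs_of_nonneg (by positivity : (0:ℝ) ≤ Real.sqrt a + Real.sqrt b), ← abs_mul]
    congr 1
    have hA : Real.sqrt a ^ 2 = a := Real.sq_sqrt (hD.le.trans ha)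
    have hB : Real.sqrt b ^ 2 = b := Real.sq_sqrt (hD.le.trans hb)
    ring_nf
    nlinarith [hA, hB]
  have h2 : Real.sqrt D ≤ Real.sqrt a + Real.sqrt b := by
    have := Real.sqrt_le_sqrt ha
    have := Real.sqrt_nonneg b
    linarith
  calc |Real.sqrt a - Real.sqrt b| * Real.sqrt D
      ≤ |Real.sqrt a - Real.sqrt b| * (Real.sqrt a + Real.sqrt b) := by
        exact mul_le_mul_of_nonneg_left h2 (abs_nonneg _)
    _ = |a - b| := h1

/-- Graph parametrization of a spherical cap. -/
noncomputable def gmap (m : ℕ) (r s : ℝ) (i : Fin (m + 1))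
    (u : EuclideanSpace ℝ (Fin m)) : EuclideanSpace ℝ (Fin (m + 1)) :=
  WithLp.toLp 2 (i.insertNth (α := fun _ => ℝ) (s * Real.sqrt (r ^ 2 - ‖u‖ ^ 2)) (WithLp.ofLp u))

lemma gmap_lip (m : ℕ) {r s c : ℝ} (i : Fin (m + 1)) (hs : |s| ≤ 1) (hc : 0 ≤ c)
    (hcr : c < r) :
    LipschitzOnWith (Real.toNNReal (2 * c / Real.sqrt (r ^ 2 - c ^ 2) + 1))
      (gmap m r s i) (closedBall 0 c) := by
  have hD : (0:ℝ) < r ^ 2 - c ^ 2 := by nlinarith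
  set K₁ : ℝ := 2 * c / Real.sqrt (r ^ 2 - c ^ 2) with hK₁
  have hK₁0 : 0 ≤ K₁ := by positivity
  rw [lipschitzOnWith_iff_dist_le_mul]
  intro u hu v hv
  rw [mem_closedBall, dist_zero_right] at hu hv
  have hnu : 0 ≤ ‖u‖ := norm_nonneg _
  have hnv : 0 ≤ ‖v‖ := norm_nonneg _
  set a := r ^ 2 - ‖u‖ ^ 2 with hadef
  set b := r ^ 2 - ‖v‖ ^ 2 with hbdef
  have hDa : r ^ 2 - c ^ 2 ≤ a := by nlinarith
  have hDb : r ^ 2 - c ^ 2 ≤ b := by nlinarith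
  have habs : |a - b| ≤ 2 * c * dist u v := by
    have h1 : |a - b| = |‖u‖ - ‖v‖| * (‖u‖ + ‖v‖) := by
      rw [← abs_of_nonneg (by positivity : (0:ℝ) ≤ ‖u‖ + ‖v‖), ← abs_mul, abs_sub_comm]
      congr 1; ring
    have h2 : |‖u‖ - ‖v‖| ≤ dist u v := by
      rw [dist_eq_norm]; exact abs_norm_sub_norm_le u v
    calc |a - b| = |‖u‖ - ‖v‖| * (‖u‖ + ‖v‖) := h1
      _ ≤ dist u v * (2 * c) := by
          apply mul_le_mul h2 (by linarith) (by positivity) dist_nonneg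
      _ = 2 * c * dist u v := by ring
  have hΔ : |s * Real.sqrt a - s * Real.sqrt b| ≤ K₁ * dist u v := by
    have : |s * Real.sqrt a - s * Real.sqrt b| = |s| * |Real.sqrt a - Real.sqrt b| := by
      rw [← abs_mul]; congr 1; ring
    rw [this]
    calc |s| * |Real.sqrt a - Real.sqrt b| ≤ 1 * |Real.sqrt a - Real.sqrt b| :=
          mul_le_mul_of_nonneg_right hs (abs_nonneg _)
      _ = |Real.sqrt a - Real.sqrt b| := one_mul _
      _ ≤ |a - b| / Real.sqrt (r ^ 2 - c ^ 2) := sqrt_sub_sqrt hD hDa hDb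
      _ ≤ 2 * c * dist u v / Real.sqrt (r ^ 2 - c ^ 2) := by gcongr
      _ = K₁ * dist u v := by rw [hK₁]; ring
  -- distance computation
  have hsum : dist (gmap m r s i u) (gmap m r s i v) ^ 2
      = (s * Real.sqrt a - s * Real.sqrt b) ^ 2 + dist u v ^ 2 := by
    rw [distsq, Fin.sum_univ_succAbove _ i, distsq]
    simp [gmap, WithLp.ofLp_toLp, Fin.insertNth_apply_same, Fin.insertNth_apply_succAbove, hadef, hbdef]
  have hfin : dist (gmap m r s i u) (gmap m r s i v) ≤ (K₁ + 1) * dist u v := by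
    have hd0 : 0 ≤ dist (gmap m r s i u) (gmap m r s i v) := dist_nonneg
    nlinarith [hsum, hΔ, abs_nonneg (s * Real.sqrt a - s * Real.sqrt b),
      sq_abs (s * Real.sqrt a - s * Real.sqrt b), dist_nonneg (x := u) (y := v),
      mul_le_mul hΔ hΔ (abs_nonneg _) (by positivity : (0:ℝ) ≤ K₁ * dist u v)]
  calc dist (gmap m r s i u) (gmap m r s i v) ≤ (K₁ + 1) * dist u v := hfin
    _ = (Real.toNNReal (K₁ + 1) : ℝ) * dist u v := by
        rw [Real.coe_toNNReal _ (by linarith)]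

lemma cover {m : ℕ} {r : ℝ} (hr : 0 < r) :
    sphere (0 : EuclideanSpace ℝ (Fin (m + 1))) r ⊆
      ⋃ i : Fin (m + 1),
        (gmap m r 1 i '' closedBall 0 (Real.sqrt (r ^ 2 - r ^ 2 / (m + 1))) ∪
         gmap m r (-1) i '' closedBall 0 (Real.sqrt (r ^ 2 - r ^ 2 / (m + 1)))) := by
  intro y hy
  rw [mem_sphere_zero_iff_norm] at hy
  have hsum : ∑ j, y j ^ 2 = r ^ 2 := by rw [← normsq, hy]
  have hex : ∃ i, r ^ 2 / (m + 1) ≤ y i ^ 2 := by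
    by_contra h
    push_neg at h
    have : ∑ j, y j ^ 2 < ∑ _j : Fin (m + 1), r ^ 2 / (m + 1) :=
      Finset.sum_lt_sum_of_nonempty Finset.univ_nonempty fun i _ => h i
    rw [Finset.sum_const, Finset.card_univ, Fintype.card_fin, nsmul_eq_mul] at this
    rw [hsum] at this
    have hm1 : ((m : ℝ) + 1) ≠ 0 := by positivity
    rw [show ((m + 1 : ℕ) : ℝ) = (m : ℝ) + 1 by push_cast; ring] at this
    rw [mul_div_cancel₀ _ hm1] at this
    exact lt_irrefl _ this
  obtain ⟨i, hi⟩ := hex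
  set u : EuclideanSpace ℝ (Fin m) := WithLp.toLp 2 (fun k => y (i.succAbove k)) with hu
  have hu2 : ‖u‖ ^ 2 = r ^ 2 - y i ^ 2 := by
    rw [normsq]
    have := Fin.sum_univ_succAbove (fun j => y j ^ 2) i
    rw [hsum] at this
    simpa [hu] using by linarith [this]
  have hub : u ∈ closedBall (0 : EuclideanSpace ℝ (Fin m))
      (Real.sqrt (r ^ 2 - r ^ 2 / (m + 1))) := by
    rw [mem_closedBall, dist_zero_right]
    have h1 : ‖u‖ ^ 2 ≤ r ^ 2 - r ^ 2 / (m + 1) := by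
      rw [hu2]
      linarith [hi]
    calc ‖u‖ = Real.sqrt (‖u‖ ^ 2) := (Real.sqrt_sq (norm_nonneg _)).symm
      _ ≤ _ := Real.sqrt_le_sqrt h1
  have hsq : Real.sqrt (r ^ 2 - ‖u‖ ^ 2) = |y i| := by
    rw [hu2, show r ^ 2 - (r ^ 2 - y i ^ 2) = y i ^ 2 by ring, Real.sqrt_sq_eq_abs]
  refine Set.mem_iUnion.2 ⟨i, ?_⟩
  rcases le_or_gt 0 (y i) with hyi | hyi
  · left
    refine ⟨u, hub, ?_⟩
    rw [gmap, hsq, one_mul, abs_of_nonneg hyi]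
    exact congrArg (WithLp.toLp 2) (Fin.insertNth_self_removeNth i y.ofLp)
  · right
    refine ⟨u, hub, ?_⟩
    rw [gmap, hsq, abs_of_neg hyi]
    rw [show (-1 : ℝ) * -y i = y i by ring]
    exact congrArg (WithLp.toLp 2) (Fin.insertNth_self_removeNth i y.ofLp)

lemma ball_fin (m : ℕ) (R : ℝ) :
    μH[(m : ℝ)] (closedBall (0 : EuclideanSpace ℝ (Fin m)) R) < ⊤ := by
  set e := WithLp.equiv 2 (Fin m → ℝ)
  have hanti := PiLp.antilipschitzWith_ofLp 2 (fun _ : Fin m => ℝ)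
  have hlipsymm : LipschitzWith _ ⇑e.symm := hanti.to_rightInverse e.right_inv
  have himg : closedBall (0 : EuclideanSpace ℝ (Fin m)) R
      = ⇑e.symm '' (⇑e '' closedBall 0 R) := by
    rw [Set.image_image]; simp
  have hsub : ⇑e '' closedBall (0 : EuclideanSpace ℝ (Fin m)) R
      ⊆ closedBall (0 : Fin m → ℝ) R := by
    rintro _ ⟨x, hx, rfl⟩
    rw [mem_closedBall] at hx ⊢
    calc dist (e x) 0 = dist (e x) (e 0) := rfl
      _ ≤ 1 * dist x 0 := (PiLp.lipschitzWith_ofLp 2 (fun _ : Fin m => ℝ)).dist_le_mul x 0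
      _ = dist x 0 := by simp
      _ ≤ R := hx
  have key : μH[(m : ℝ)] (closedBall (0 : Fin m → ℝ) R) < ⊤ := by
    have : μH[((Fintype.card (Fin m) : ℕ) : ℝ)] = (volume : Measure (Fin m → ℝ)) :=
      hausdorffMeasure_pi_real
    rw [Fintype.card_fin] at this
    rw [this]
    exact (isCompact_closedBall _ _).measure_lt_top
  calc μH[(m : ℝ)] (closedBall (0 : EuclideanSpace ℝ (Fin m)) R)
      = μH[(m : ℝ)] (⇑e.symm '' (⇑e '' closedBall 0 R)) := by rw [← himg]
    _ ≤ _ ^ (m : ℝ) * μH[(m : ℝ)] (⇑e '' closedBall 0 R) :=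
        hlipsymm.hausdorffMeasure_image_le (by positivity) _
    _ ≤ _ ^ (m : ℝ) * μH[(m : ℝ)] (closedBall (0 : Fin m → ℝ) R) :=
        mul_le_mul_right (measure_mono hsub) _
    _ < ⊤ := ENNReal.mul_lt_top
        (ENNReal.rpow_lt_top_of_nonneg (by positivity) ENNReal.coe_ne_top) key

lemma ball_pos (m : ℕ) (hm : 1 ≤ m) {R : ℝ} (hR : 0 < R) :
    0 < μH[(m : ℝ)] (closedBall (0 : EuclideanSpace ℝ (Fin m)) R) := by
  set e := WithLp.equiv 2 (Fin m → ℝ)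
  have hmR : (0:ℝ) < (m:ℝ) := by exact_mod_cast hm
  have hsub : closedBall (0 : Fin m → ℝ) (R / m)
      ⊆ ⇑e '' closedBall (0 : EuclideanSpace ℝ (Fin m)) R := by
    intro x hx
    refine ⟨e.symm x, ?_, e.apply_symm_apply x⟩
    rw [mem_closedBall, dist_zero_right] at hx ⊢
    have hcoord : ∀ i, |(e.symm x : EuclideanSpace ℝ (Fin m)) i| ≤ R / m := by
      intro i
      have h1 : |x i| ≤ ‖x‖ := by
        simpa [Real.norm_eq_abs] using norm_le_pi_norm x i
      simpa [e, WithLp.equiv_symm_apply] using h1.trans hx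
    have h2 : ‖(e.symm x : EuclideanSpace ℝ (Fin m))‖ ^ 2 ≤ (m : ℝ) * (R / m) ^ 2 := by
      rw [normsq]
      calc ∑ i, (e.symm x : EuclideanSpace ℝ (Fin m)) i ^ 2
          ≤ ∑ _i : Fin m, (R / m) ^ 2 := by
            apply Finset.sum_le_sum
            intro i _
            have := hcoord i
            nlinarith [abs_nonneg ((e.symm x : EuclideanSpace ℝ (Fin m)) i),
              sq_abs ((e.symm x : EuclideanSpace ℝ (Fin m)) i)]
        _ = (m : ℝ) * (R / m) ^ 2 := by
            rw [Finset.sum_const, Finset.card_univ, Fintype.card_fin, nsmul_eq_mul]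
    have h3 : (m : ℝ) * (R / m) ^ 2 ≤ R ^ 2 := by
      rw [div_pow]
      rw [show (m:ℝ) * (R^2 / (m:ℝ)^2) = R^2 / m by field_simp]
      exact div_le_self (by positivity) (by exact_mod_cast hm)
    calc ‖(e.symm x : EuclideanSpace ℝ (Fin m))‖
        = Real.sqrt (‖(e.symm x : EuclideanSpace ℝ (Fin m))‖ ^ 2) :=
          (Real.sqrt_sq (norm_nonneg _)).symm
      _ ≤ Real.sqrt (R ^ 2) := Real.sqrt_le_sqrt (h2.trans h3)
      _ = R := Real.sqrt_sq hR.le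
  have hvol : 0 < μH[(m : ℝ)] (closedBall (0 : Fin m → ℝ) (R / m)) := by
    have hpi : μH[((Fintype.card (Fin m) : ℕ) : ℝ)] = (volume : Measure (Fin m → ℝ)) :=
      hausdorffMeasure_pi_real
    rw [Fintype.card_fin] at hpi
    rw [hpi]
    exact measure_closedBall_pos _ _ (by positivity)
  calc (0 : ℝ≥0∞) < μH[(m : ℝ)] (closedBall (0 : Fin m → ℝ) (R / m)) := hvol
    _ ≤ μH[(m : ℝ)] (⇑e '' closedBall (0 : EuclideanSpace ℝ (Fin m)) R) :=
        measure_mono hsub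
    _ ≤ μH[(m : ℝ)] (closedBall (0 : EuclideanSpace ℝ (Fin m)) R) := by
        have h := (PiLp.lipschitzWith_ofLp 2 (fun _ : Fin m => ℝ)).hausdorffMeasure_image_le
          (show (0:ℝ) ≤ (m:ℝ) by positivity) (closedBall (0 : EuclideanSpace ℝ (Fin m)) R)
        simpa [e, WithLp.equiv_apply] using h



lemma sphere_translate (n : ℕ) (x : EuclideanSpace ℝ (Fin n)) (r : ℝ) :
    μH[(n : ℝ) - 1] (sphere x r) =
      μH[(n : ℝ) - 1] (sphere (0 : EuclideanSpace ℝ (Fin n)) r) := by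
  have hiso : Isometry (fun z : EuclideanSpace ℝ (Fin n) => x + z) :=
    Isometry.of_dist_eq fun a b => dist_add_left x a b
  have himg : (fun z : EuclideanSpace ℝ (Fin n) => x + z) '' sphere 0 r = sphere x r := by
    ext y
    constructor
    · rintro ⟨z, hz, rfl⟩
      rw [mem_sphere_zero_iff_norm] at hz
      rw [mem_sphere_iff_norm]
      simpa using hz
    · intro hy
      rw [mem_sphere_iff_norm] at hy
      exact ⟨y - x, by rw [mem_sphere_zero_iff_norm]; exact hy, by module⟩
  rw [← himg, hiso.hausdorffMeasure_image (Or.inr fun y => ⟨y - x, by module⟩)]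

lemma sphere_lt_top (n : ℕ) (hn : 1 ≤ n) (x : EuclideanSpace ℝ (Fin n)) {r : ℝ}
    (hr : 0 < r) : μH[(n : ℝ) - 1] (sphere x r) < ⊤ := by
  obtain ⟨m, rfl⟩ : ∃ m, n = m + 1 := ⟨n - 1, (Nat.succ_pred_eq_of_pos hn).symm⟩
  rw [sphere_translate]
  have hd : ((m + 1 : ℕ) : ℝ) - 1 = (m : ℝ) := by push_cast; ring
  set c : ℝ := Real.sqrt (r ^ 2 - r ^ 2 / (m + 1)) with hcdef
  have harg : (0:ℝ) ≤ r ^ 2 - r ^ 2 / (m + 1) := by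
    have h1 : r ^ 2 / ((m:ℝ) + 1) ≤ r ^ 2 := by
      apply div_le_self (by positivity)
      have h0 : (0:ℝ) ≤ (m:ℝ) := Nat.cast_nonneg m
      have : (1:ℝ) ≤ (m:ℝ) + 1 := by linarith
      linarith
    linarith
  have hc0 : 0 ≤ c := Real.sqrt_nonneg _
  have hcsq : c ^ 2 = r ^ 2 - r ^ 2 / (m + 1) := Real.sq_sqrt harg
  have hclt : c < r := by
    have h2 : c ^ 2 < r ^ 2 := by
      rw [hcsq]
      have : 0 < r ^ 2 / ((m:ℝ) + 1) := by positivity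
      linarith
    nlinarith
  have him : ∀ s : ℝ, |s| ≤ 1 → ∀ i : Fin (m + 1),
      μH[((m + 1 : ℕ) : ℝ) - 1] (gmap m r s i '' closedBall 0 c) < ⊤ := by
    intro s hs i
    calc μH[((m + 1 : ℕ) : ℝ) - 1] (gmap m r s i '' closedBall 0 c)
        ≤ _ ^ (((m + 1 : ℕ) : ℝ) - 1) *
            μH[((m + 1 : ℕ) : ℝ) - 1] (closedBall (0 : EuclideanSpace ℝ (Fin m)) c) :=
          (gmap_lip m i hs hc0 hclt).hausdorffMeasure_image_le (by rw [hd]; positivity)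
      _ < ⊤ := by
          apply ENNReal.mul_lt_top
            (ENNReal.rpow_lt_top_of_nonneg (by rw [hd]; positivity) ENNReal.coe_ne_top)
          rw [hd]
          exact ball_fin m c
  calc μH[((m + 1 : ℕ) : ℝ) - 1] (sphere (0 : EuclideanSpace ℝ (Fin (m+1))) r)
      ≤ μH[((m + 1 : ℕ) : ℝ) - 1] (⋃ i : Fin (m + 1),
          (gmap m r 1 i '' closedBall 0 c ∪ gmap m r (-1) i '' closedBall 0 c)) :=
        measure_mono (cover hr)
    _ ≤ ∑ i : Fin (m + 1), μH[((m + 1 : ℕ) : ℝ) - 1]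
          (gmap m r 1 i '' closedBall 0 c ∪ gmap m r (-1) i '' closedBall 0 c) :=
        measure_iUnion_fintype_le _ _
    _ < ⊤ := by
        rw [ENNReal.sum_lt_top]
        intro i _
        calc μH[((m + 1 : ℕ) : ℝ) - 1]
              (gmap m r 1 i '' closedBall 0 c ∪ gmap m r (-1) i '' closedBall 0 c)
            ≤ μH[((m + 1 : ℕ) : ℝ) - 1] (gmap m r 1 i '' closedBall 0 c) +
              μH[((m + 1 : ℕ) : ℝ) - 1] (gmap m r (-1) i '' closedBall 0 c) :=
              measure_union_le _ _
          _ < ⊤ := ENNReal.add_lt_top.2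
              ⟨him 1 (by norm_num) i, him (-1) (by norm_num) i⟩

lemma sphere_pos (n : ℕ) (hn : 2 ≤ n) (x : EuclideanSpace ℝ (Fin n)) {r : ℝ}
    (hr : 0 < r) : 0 < μH[(n : ℝ) - 1] (sphere x r) := by
  obtain ⟨m, rfl⟩ : ∃ m, n = m + 1 :=
    ⟨n - 1, (Nat.succ_pred_eq_of_pos (by omega)).symm⟩
  have hm : 1 ≤ m := by omega
  rw [sphere_translate]
  have hd : ((m + 1 : ℕ) : ℝ) - 1 = (m : ℝ) := by push_cast; ring
  set ρ : EuclideanSpace ℝ (Fin (m + 1)) → EuclideanSpace ℝ (Fin m) :=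
    fun y => WithLp.toLp 2 (fun k => y ((Fin.last m).succAbove k)) with hρ
  have hlip : LipschitzWith 1 ρ := by
    apply LipschitzWith.of_dist_le_mul
    intro y z
    rw [NNReal.coe_one, one_mul]
    have h1 : dist (ρ y) (ρ z) ^ 2 ≤ dist y z ^ 2 := by
      rw [distsq, distsq, Fin.sum_univ_succAbove _ (Fin.last m)]
      have : (0:ℝ) ≤ (y (Fin.last m) - z (Fin.last m)) ^ 2 := sq_nonneg _
      simp only [hρ, WithLp.ofLp_toLp]
      linarith
    nlinarith [dist_nonneg (x := ρ y) (y := ρ z), dist_nonneg (x := y) (y := z)]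
  have hsub : closedBall (0 : EuclideanSpace ℝ (Fin m)) r ⊆
      ρ '' sphere (0 : EuclideanSpace ℝ (Fin (m+1))) r := by
    intro u hu
    rw [mem_closedBall, dist_zero_right] at hu
    have harg : (0:ℝ) ≤ r ^ 2 - ‖u‖ ^ 2 := by nlinarith [norm_nonneg u]
    set y : EuclideanSpace ℝ (Fin (m + 1)) :=
      WithLp.toLp 2 ((Fin.last m).insertNth (α := fun _ => ℝ) (Real.sqrt (r ^ 2 - ‖u‖ ^ 2)) (WithLp.ofLp u)) with hy
    have hny : ‖y‖ = r := by
      have h2 : ‖y‖ ^ 2 = r ^ 2 := by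
        rw [normsq, Fin.sum_univ_succAbove _ (Fin.last m)]
        simp only [hy, WithLp.ofLp_toLp, Fin.insertNth_apply_same, Fin.insertNth_apply_succAbove]
        rw [Real.sq_sqrt harg, ← normsq]
        ring
      nlinarith [norm_nonneg y]
    refine ⟨y, mem_sphere_zero_iff_norm.2 hny, ?_⟩
    ext k
    simp only [hρ, hy, WithLp.ofLp_toLp, Fin.insertNth_apply_succAbove]
  calc (0 : ℝ≥0∞)
      < μH[(m : ℝ)] (closedBall (0 : EuclideanSpace ℝ (Fin m)) r) := ball_pos m hm hr
    _ = μH[((m + 1 : ℕ) : ℝ) - 1] (closedBall (0 : EuclideanSpace ℝ (Fin m)) r) := by rw [hd]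
    _ ≤ μH[((m + 1 : ℕ) : ℝ) - 1] (ρ '' sphere (0 : EuclideanSpace ℝ (Fin (m+1))) r) :=
        measure_mono hsub
    _ ≤ μH[((m + 1 : ℕ) : ℝ) - 1] (sphere (0 : EuclideanSpace ℝ (Fin (m+1))) r) := by
        have h := hlip.hausdorffMeasure_image_le
          (show (0:ℝ) ≤ ((m + 1 : ℕ) : ℝ) - 1 by rw [hd]; positivity)
          (sphere (0 : EuclideanSpace ℝ (Fin (m+1))) r)
        simpa using h

end SphAux

namespace SphAux

open Complex

lemma cont_g {n : ℕ} (η : EuclideanSpace ℝ (Fin n)) :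
    Continuous (fun z : EuclideanSpace ℝ (Fin n) =>
      Complex.exp (-Complex.I * ((inner ℝ z η : ℝ) : ℂ))) :=
  Complex.continuous_exp.comp (continuous_const.mul
    (Complex.continuous_ofReal.comp (continuous_id.inner continuous_const)))

lemma norm_g (t : ℝ) : ‖Complex.exp (-Complex.I * (t:ℂ))‖ = 1 := by
  rw [Complex.norm_exp]; simp

lemma re_g (t : ℝ) : (Complex.exp (-Complex.I * (t:ℂ))).re = Real.cos t := by
  rw [show -Complex.I * (t:ℂ) = ((-t : ℝ):ℂ) * Complex.I by push_cast; ring,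
    Complex.exp_ofReal_mul_I_re, Real.cos_neg]

lemma int_g {n : ℕ} (η : EuclideanSpace ℝ (Fin n))
    (μ : Measure (EuclideanSpace ℝ (Fin n))) [IsFiniteMeasure μ] :
    Integrable (fun z => Complex.exp (-Complex.I * ((inner ℝ z η : ℝ) : ℂ))) μ := by
  refine Integrable.mono' (integrable_const 1) (cont_g η).aestronglyMeasurable ?_
  filter_upwards with z
  rw [norm_g]

/-- Translation identity for the exponential integral over a sphere. -/
lemma trans_int {n : ℕ} (x η : EuclideanSpace ℝ (Fin n)) (r : ℝ) :
    ∫ y, Complex.exp (-Complex.I * ((inner ℝ y η : ℝ) : ℂ))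
        ∂(μH[(n : ℝ) - 1].restrict (sphere x r)) =
      Complex.exp (-Complex.I * ((inner ℝ x η : ℝ) : ℂ)) *
        ∫ z, Complex.exp (-Complex.I * ((inner ℝ z η : ℝ) : ℂ))
          ∂(μH[(n : ℝ) - 1].restrict (sphere (0 : EuclideanSpace ℝ (Fin n)) r)) := by
  set T : EuclideanSpace ℝ (Fin n) ≃ᵢ EuclideanSpace ℝ (Fin n) :=
    IsometryEquiv.constVAdd x with hT
  have hpre : ⇑T ⁻¹' sphere x r = sphere (0 : EuclideanSpace ℝ (Fin n)) r := by
    ext z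
    simp only [Set.mem_preimage, mem_sphere_iff_norm, mem_sphere_zero_iff_norm, hT]
    rw [show (IsometryEquiv.constVAdd x :
        EuclideanSpace ℝ (Fin n) ≃ᵢ EuclideanSpace ℝ (Fin n)) z = x + z from rfl]
    rw [add_sub_cancel_left, sub_zero]
  have h1 : μH[(n : ℝ) - 1].restrict (sphere x r)
      = Measure.map T (μH[(n : ℝ) - 1].restrict (sphere (0 : EuclideanSpace ℝ (Fin n)) r)) := by
    rw [← hpre, ← Measure.restrict_map T.continuous.measurable isClosed_sphere.measurableSet,
      T.map_hausdorffMeasure]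
  rw [h1, integral_map T.continuous.measurable.aemeasurable (cont_g η).aestronglyMeasurable]
  rw [← integral_const_mul]
  congr 1
  funext z
  rw [show T z = x + z from rfl, ← Complex.exp_add]
  congr 1
  rw [inner_add_left]
  push_cast
  ring

/-- Rotation identity for the exponential integral over a centered sphere. -/
lemma rot_int {n : ℕ} {η η' : EuclideanSpace ℝ (Fin n)} (hη : ‖η‖ = 1) (hη' : ‖η'‖ = 1)
    (r : ℝ) :
    ∫ z, Complex.exp (-Complex.I * ((inner ℝ z η : ℝ) : ℂ))
        ∂(μH[(n : ℝ) - 1].restrict (sphere (0 : EuclideanSpace ℝ (Fin n)) r)) =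
      ∫ z, Complex.exp (-Complex.I * ((inner ℝ z η' : ℝ) : ℂ))
        ∂(μH[(n : ℝ) - 1].restrict (sphere (0 : EuclideanSpace ℝ (Fin n)) r)) := by
  set L : EuclideanSpace ℝ (Fin n) ≃ₗᵢ[ℝ] EuclideanSpace ℝ (Fin n) :=
    Submodule.reflection (Submodule.span ℝ {η' - η})ᗮ with hLdef
  have hL : L η' = η := Submodule.reflection_sub (by rw [hη', hη])
  set T : EuclideanSpace ℝ (Fin n) ≃ᵢ EuclideanSpace ℝ (Fin n) := L.toIsometryEquiv with hT
  have hTL : ∀ z, T z = L z := fun z => rfl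
  have hpre : ⇑T ⁻¹' sphere (0 : EuclideanSpace ℝ (Fin n)) r = sphere 0 r := by
    ext z
    simp only [Set.mem_preimage, mem_sphere_zero_iff_norm, hTL, L.norm_map]
  have h1 : μH[(n : ℝ) - 1].restrict (sphere (0 : EuclideanSpace ℝ (Fin n)) r)
      = Measure.map T (μH[(n : ℝ) - 1].restrict (sphere (0 : EuclideanSpace ℝ (Fin n)) r)) := by
    conv_lhs => rw [← T.map_hausdorffMeasure ((n : ℝ) - 1)]
    rw [Measure.restrict_map T.continuous.measurable isClosed_sphere.measurableSet, hpre]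
  conv_lhs => rw [h1, integral_map T.continuous.measurable.aemeasurable (cont_g η).aestronglyMeasurable]
  congr 1
  funext z
  rw [hTL, show (inner ℝ (L z) η : ℝ) = (inner ℝ (L z) (L η') : ℝ) by rw [hL],
    L.inner_map_map]

end SphAux

namespace SphAux

open Complex

lemma c_ne_zero (n : ℕ) (hn : 2 ≤ n) {η : EuclideanSpace ℝ (Fin n)} (hη : ‖η‖ = 1) :
    (∫ z, Complex.exp (-Complex.I * ((inner ℝ z η : ℝ) : ℂ))
        ∂(μH[(n : ℝ) - 1].restrict (sphere (0 : EuclideanSpace ℝ (Fin n)) 1))) ≠ 0 := by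
  set μ := μH[(n : ℝ) - 1].restrict (sphere (0 : EuclideanSpace ℝ (Fin n)) 1) with hμ
  haveI : IsFiniteMeasure μ := ⟨by
    rw [hμ, Measure.restrict_apply_univ]
    exact sphere_lt_top n (by omega) 0 one_pos⟩
  intro h0
  have hre : (∫ z, Complex.exp (-Complex.I * ((inner ℝ z η : ℝ) : ℂ)) ∂μ).re
      = ∫ z, Real.cos ((inner ℝ z η : ℝ)) ∂μ := by
    have h2 := integral_re (int_g η μ)
    simp only [RCLike.re_to_complex] at h2
    rw [← h2]
    congr 1; funext z; rw [re_g]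
  have hcosint : Integrable (fun z => Real.cos ((inner ℝ z η : ℝ))) μ := by
    refine Integrable.mono' (integrable_const 1)
      ((Real.continuous_cos.comp
        (continuous_id.inner continuous_const)).aestronglyMeasurable) ?_
    filter_upwards with z
    rw [Real.norm_eq_abs]
    exact Real.abs_cos_le_one _
  have hae : ∀ᵐ z ∂μ, Real.cos 1 ≤ Real.cos ((inner ℝ z η : ℝ)) := by
    rw [hμ]
    filter_upwards [ae_restrict_mem isClosed_sphere.measurableSet] with z hz
    rw [mem_sphere_zero_iff_norm] at hz
    have h1 : |(inner ℝ z η : ℝ)| ≤ 1 := by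
      calc |(inner ℝ z η : ℝ)| ≤ ‖z‖ * ‖η‖ := abs_real_inner_le_norm z η
        _ = 1 := by rw [hz, hη, one_mul]
    calc Real.cos 1 ≤ Real.cos |(inner ℝ z η : ℝ)| :=
        Real.cos_le_cos_of_nonneg_of_le_pi (abs_nonneg _)
          (by linarith [Real.pi_gt_three]) h1
      _ = Real.cos ((inner ℝ z η : ℝ)) := Real.cos_abs _
  have hcos1 : 0 < Real.cos 1 :=
    Real.cos_pos_of_mem_Ioo
      ⟨by linarith [Real.pi_gt_three], by linarith [Real.pi_gt_three]⟩
  have hμpos : 0 < (μ Set.univ).toReal := by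
    apply ENNReal.toReal_pos
    · rw [hμ, Measure.restrict_apply_univ]
      exact (sphere_pos n hn 0 one_pos).ne'
    · exact (measure_lt_top μ _).ne
  have hlow : Real.cos 1 * (μ Set.univ).toReal
      ≤ ∫ z, Real.cos ((inner ℝ z η : ℝ)) ∂μ := by
    have h2 := integral_mono_ae (integrable_const (Real.cos 1)) hcosint hae
    rwa [integral_const, smul_eq_mul, mul_comm] at h2
  rw [h0] at hre
  simp only [Complex.zero_re] at hre
  nlinarith

lemma cont_g' {n : ℕ} (y : EuclideanSpace ℝ (Fin n)) :
    Continuous (fun η : EuclideanSpace ℝ (Fin n) =>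
      Complex.exp (-Complex.I * ((inner ℝ y η : ℝ) : ℂ))) :=
  Complex.continuous_exp.comp (continuous_const.mul
    (Complex.continuous_ofReal.comp (continuous_const.inner continuous_id)))

lemma key (n : ℕ) (hn : 2 ≤ n) (f : EuclideanSpace ℝ (Fin n) → ℂ)
    (hf : Integrable f (sphereMeasure n)) (x : EuclideanSpace ℝ (Fin n)) {r : ℝ}
    (hr : 0 < r) :
    ∫ y, (∫ η, Complex.exp (-Complex.I * ((inner ℝ y η : ℝ) : ℂ)) * f η ∂(sphereMeasure n))
        ∂(μH[(n : ℝ) - 1].restrict (sphere x r)) =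
      (∫ z, Complex.exp (-Complex.I *
          ((inner ℝ z (EuclideanSpace.single (⟨0, by omega⟩ : Fin n) (1:ℝ)) : ℝ) : ℂ))
          ∂(μH[(n : ℝ) - 1].restrict (sphere (0 : EuclideanSpace ℝ (Fin n)) r))) *
      ∫ η, Complex.exp (-Complex.I * ((inner ℝ x η : ℝ) : ℂ)) * f η ∂(sphereMeasure n) := by
  set η₀ : EuclideanSpace ℝ (Fin n) :=
    EuclideanSpace.single (⟨0, by omega⟩ : Fin n) (1:ℝ) with hη₀
  have hnη₀ : ‖η₀‖ = 1 := by rw [hη₀, EuclideanSpace.norm_single]; norm_num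
  set μ := μH[(n : ℝ) - 1].restrict (sphere x r) with hμ
  haveI : IsFiniteMeasure μ := ⟨by
    rw [hμ, Measure.restrict_apply_univ]
    exact sphere_lt_top n (by omega) x hr⟩
  haveI : IsFiniteMeasure (sphereMeasure n) := ⟨by
    rw [sphereMeasure, Measure.restrict_apply_univ]
    exact sphere_lt_top n (by omega) 0 one_pos⟩
  have hmeas : AEStronglyMeasurable
      (fun p : EuclideanSpace ℝ (Fin n) × EuclideanSpace ℝ (Fin n) =>
        Complex.exp (-Complex.I * ((inner ℝ p.1 p.2 : ℝ) : ℂ)) * f p.2)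
      (μ.prod (sphereMeasure n)) := by
    apply AEStronglyMeasurable.mul
    · exact (Complex.continuous_exp.comp (continuous_const.mul
        (Complex.continuous_ofReal.comp continuous_inner))).aestronglyMeasurable
    · exact hf.1.comp_quasiMeasurePreserving Measure.quasiMeasurePreserving_snd
  have hint : Integrable
      (fun p : EuclideanSpace ℝ (Fin n) × EuclideanSpace ℝ (Fin n) =>
        Complex.exp (-Complex.I * ((inner ℝ p.1 p.2 : ℝ) : ℂ)) * f p.2)
      (μ.prod (sphereMeasure n)) := by
    rw [integrable_prod_iff hmeas]
    constructor
    · filter_upwards with y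
      exact hf.bdd_mul (cont_g' y).aestronglyMeasurable (Filter.Eventually.of_forall fun η => (norm_g _).le)
    · have heq : (fun y => ∫ η, ‖Complex.exp (-Complex.I * ((inner ℝ y η : ℝ) : ℂ)) * f η‖
          ∂(sphereMeasure n)) = fun _ => ∫ η, ‖f η‖ ∂(sphereMeasure n) := by
        funext y; congr 1; funext η; rw [norm_mul, norm_g, one_mul]
      rw [heq]
      exact integrable_const _
  have hsphere_ae : ∀ᵐ η ∂(sphereMeasure n), ‖η‖ = 1 := by
    rw [sphereMeasure]
    filter_upwards [ae_restrict_mem isClosed_sphere.measurableSet] with η hη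
    rwa [mem_sphere_zero_iff_norm] at hη
  calc ∫ y, (∫ η, Complex.exp (-Complex.I * ((inner ℝ y η : ℝ) : ℂ)) * f η
        ∂(sphereMeasure n)) ∂μ
      = ∫ η, (∫ y, Complex.exp (-Complex.I * ((inner ℝ y η : ℝ) : ℂ)) * f η ∂μ)
          ∂(sphereMeasure n) := integral_integral_swap hint
    _ = ∫ η, (∫ y, Complex.exp (-Complex.I * ((inner ℝ y η : ℝ) : ℂ)) ∂μ) * f η
          ∂(sphereMeasure n) := by
        congr 1
        funext η
        exact integral_mul_const _ _
    _ = ∫ η, (∫ z, Complex.exp (-Complex.I * ((inner ℝ z η₀ : ℝ) : ℂ))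
            ∂(μH[(n : ℝ) - 1].restrict (sphere (0 : EuclideanSpace ℝ (Fin n)) r))) *
          (Complex.exp (-Complex.I * ((inner ℝ x η : ℝ) : ℂ)) * f η) ∂(sphereMeasure n) := by
        apply integral_congr_ae
        filter_upwards [hsphere_ae] with η hη
        rw [hμ, trans_int x η r, rot_int hη hnη₀ r]
        ring
    _ = _ := integral_const_mul _ _

end SphAux

/-- The Fourier transform `F` of a measure `f dσ` on the unit sphere vanishes at a
point `x` if and only if all of its spherical means around `x` vanish. -/
theorem fourier_sphere_zero_iff_spherical_means_zero (n : ℕ) (hn : 2 ≤ n)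
    (f : EuclideanSpace ℝ (Fin n) → ℂ) (hf : Integrable f (sphereMeasure n))
    (F : EuclideanSpace ℝ (Fin n) → ℂ)
    (hF : F = fun ξ =>
      ∫ η, Complex.exp (-Complex.I * ((inner ℝ ξ η : ℝ) : ℂ)) * f η ∂(sphereMeasure n)) :
    ∀ x : EuclideanSpace ℝ (Fin n),
      F x = 0 ↔ ∀ r : ℝ, 0 < r →
        ∫ y, F y ∂((μH[(n : ℝ) - 1]).restrict (Metric.sphere x r)) = 0 := by
  intro x
  have hFx : F x = ∫ η, Complex.exp (-Complex.I * ((inner ℝ x η : ℝ) : ℂ)) * f η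
      ∂(sphereMeasure n) := by rw [hF]
  have hkey : ∀ r : ℝ, 0 < r →
      ∫ y, F y ∂((μH[(n : ℝ) - 1]).restrict (Metric.sphere x r)) =
        (∫ z, Complex.exp (-Complex.I *
            ((inner ℝ z (EuclideanSpace.single (⟨0, by omega⟩ : Fin n) (1:ℝ)) : ℝ) : ℂ))
            ∂(μH[(n : ℝ) - 1].restrict (Metric.sphere (0 : EuclideanSpace ℝ (Fin n)) r))) *
          F x := by
    intro r hr
    rw [hFx, hF]
    exact SphAux.key n hn f hf x hr
  constructor
  · intro h0 r hr
    rw [hkey r hr, h0, mul_zero]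
  · intro h
    have h1 := h 1 one_pos
    rw [hkey 1 one_pos] at h1
    rcases mul_eq_zero.1 h1 with hc | hzero
    · exact absurd hc (SphAux.c_ne_zero n hn
        (by rw [EuclideanSpace.norm_single]; norm_num))
    · exact hzero
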